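/- Let ξ' ∈ ℝ^{n−1} with ξ' ≠ 0, t ≥ 0, and consider the n×n matrix W(ξ', t) = 2π e^{−|ξ'|t} M(ξ', t) where M has entries M_{jℓ} = δ_{jℓ}/(2μ|ξ'|) − κξ_jξ_ℓ/|ξ'|³ − κξ_jξ_ℓ t/|ξ'|² for j, ℓ < n, M_{jn} = M_{nj} = −iκξ_j t/|ξ'| for j < n, and M_{nn} = ν/|ξ'| + κt, with μ, λ > 0, κ = (λ+μ)/(4μ(2μ+λ)), ν = 1/(2μ) − κ. Then W(ξ', 0) is invertible: its determinant equals (2π/|ξ'|)ⁿ · ν · (1/(2μ))^{n−2} · (1/(2μ) − κ). -/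

import Mathlib

open Matrix

/-- the fundamental matrix W(ξ', t) = 2π e^{−|ξ'|t} M(ξ', t) of the
tangentially Fourier-transformed half-space Lamé system is invertible at t = 0,
with determinant (2π/|ξ'|)ⁿ · ν · (1/(2μ))^{n−2} · (1/(2μ) − κ).
Here the total dimension is n = m+1, `Fin m` are the tangential indices
(the paper's 1,…,n−1) and `Fin.last m` the normal index. -/
theorem lame_fundamental_matrix_det (m : ℕ) (lam mu : ℝ) (hlam : 0 < lam) (hmu : 0 < mu)
    (κ ν : ℝ) (hκ : κ = (lam + mu) / (4 * mu * (2 * mu + lam)))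
    (hν : ν = 1 / (2 * mu) - κ)
    (ξ : Fin m → ℝ) (hξ : ξ ≠ 0)
    (r : ℝ) (hr : r = Real.sqrt (∑ k, ξ k ^ 2))
    (W : ℝ → Matrix (Fin (m + 1)) (Fin (m + 1)) ℂ)
    (hWtan : ∀ (t : ℝ), 0 ≤ t → ∀ j ℓ : Fin m, W t j.castSucc ℓ.castSucc =
      2 * (Real.pi : ℂ) * Complex.exp (-(r : ℂ) * (t : ℂ)) *
        ((if j = ℓ then (1 : ℂ) else 0) / (2 * (mu : ℂ) * (r : ℂ))
          - (κ : ℂ) * (ξ j : ℂ) * (ξ ℓ : ℂ) / (r : ℂ) ^ 3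
          - (κ : ℂ) * (ξ j : ℂ) * (ξ ℓ : ℂ) * (t : ℂ) / (r : ℂ) ^ 2))
    (hWoff : ∀ (t : ℝ), 0 ≤ t → ∀ j : Fin m,
      W t j.castSucc (Fin.last m) =
        2 * (Real.pi : ℂ) * Complex.exp (-(r : ℂ) * (t : ℂ)) *
          (-Complex.I * (κ : ℂ) * (ξ j : ℂ) * (t : ℂ) / (r : ℂ)) ∧
      W t (Fin.last m) j.castSucc =
        2 * (Real.pi : ℂ) * Complex.exp (-(r : ℂ) * (t : ℂ)) *
          (-Complex.I * (κ : ℂ) * (ξ j : ℂ) * (t : ℂ) / (r : ℂ)))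
    (hWnn : ∀ (t : ℝ), 0 ≤ t → W t (Fin.last m) (Fin.last m) =
      2 * (Real.pi : ℂ) * Complex.exp (-(r : ℂ) * (t : ℂ)) *
        ((ν : ℂ) / (r : ℂ) + (κ : ℂ) * (t : ℂ))) :
    (W 0).det = ((2 * (Real.pi : ℂ) / (r : ℂ)) ^ (m + 1)) * (ν : ℂ) *
        ((1 / (2 * (mu : ℂ))) ^ (m - 1)) * (1 / (2 * (mu : ℂ)) - (κ : ℂ)) ∧
      IsUnit (W 0).det := by
  -- basic positivity facts
  have hm : 1 ≤ m := by
    rcases Nat.eq_zero_or_pos m with h | h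
    · subst h; exact absurd (funext fun k => k.elim0) hξ
    · exact h
  have hsum : 0 < ∑ k, ξ k ^ 2 := by
    rcases Function.ne_iff.1 hξ with ⟨k, hk⟩
    have : (0:ℝ) < ξ k ^ 2 := pow_two_pos_of_ne_zero hk
    exact Finset.sum_pos' (fun i _ => by positivity) ⟨k, Finset.mem_univ k, this⟩
  have hrpos : 0 < r := by rw [hr]; exact Real.sqrt_pos.2 hsum
  have hrsq : r ^ 2 = ∑ k, ξ k ^ 2 := by
    rw [hr]; exact Real.sq_sqrt hsum.le
  have hrC : (r : ℂ) ≠ 0 := by exact_mod_cast hrpos.ne'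
  have hmuC : (mu : ℂ) ≠ 0 := by exact_mod_cast hmu.ne'
  have hνpos : 0 < ν := by
    have : ν = (3 * mu + lam) / (4 * mu * (2 * mu + lam)) := by
      rw [hν, hκ]; field_simp; ring
    rw [this]; positivity
  -- the blocks
  set u : Fin m → ℂ := fun j => (ξ j : ℂ) with hu
  set v : Fin m → ℂ := fun j => -2 * (mu : ℂ) * (κ : ℂ) * (ξ j : ℂ) / (r : ℂ) ^ 2 with hv
  set s : ℂ := 2 * (Real.pi : ℂ) / (r : ℂ) * (1 / (2 * (mu : ℂ))) with hs
  set A : Matrix (Fin m) (Fin m) ℂ :=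
    s • (1 + Matrix.replicateCol (Fin 1) u * Matrix.replicateRow (Fin 1) v) with hA
  set D : Matrix (Fin 1) (Fin 1) ℂ :=
    fun _ _ => 2 * (Real.pi : ℂ) * ((ν : ℂ) / (r : ℂ)) with hD
  have hW0 : W 0 = (Matrix.fromBlocks A 0 0 D).submatrix
      finSumFinEquiv.symm finSumFinEquiv.symm := by
    ext i k
    rw [Matrix.submatrix_apply]
    induction i using Fin.lastCases with
    | last =>
      induction k using Fin.lastCases with
      | last =>
        rw [finSumFinEquiv_symm_last, hWnn 0 le_rfl]
        simp [hD]
        rfl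
      | cast ℓ =>
        have h1 : finSumFinEquiv.symm ℓ.castSucc = Sum.inl ℓ :=
          finSumFinEquiv_symm_apply_castAdd ℓ
        rw [finSumFinEquiv_symm_last, h1, (hWoff 0 le_rfl ℓ).2]
        simp
    | cast j =>
      have h1 : finSumFinEquiv.symm j.castSucc = Sum.inl j :=
        finSumFinEquiv_symm_apply_castAdd j
      induction k using Fin.lastCases with
      | last =>
        rw [finSumFinEquiv_symm_last, h1, (hWoff 0 le_rfl j).1]
        simp
      | cast ℓ =>
        have h2 : finSumFinEquiv.symm ℓ.castSucc = Sum.inl ℓ :=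
          finSumFinEquiv_symm_apply_castAdd ℓ
        rw [h1, h2, hWtan 0 le_rfl j ℓ]
        simp only [Matrix.fromBlocks_apply₁₁, hA, Matrix.smul_apply, Matrix.add_apply,
          Matrix.one_apply, Matrix.mul_apply, Fin.sum_univ_one, Matrix.replicateCol_apply,
          Matrix.replicateRow_apply, hu, hv, hs, smul_eq_mul]
        simp only [Complex.ofReal_zero, mul_zero, neg_zero, zero_mul, Complex.exp_zero,
          mul_one, zero_div, sub_zero]
        by_cases h : j = ℓ <;> simp only [h, if_true, if_false] <;> field_simp <;> ring
  have hdotv : v ⬝ᵥ u = -2 * (mu : ℂ) * (κ : ℂ) := by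
    have hsC : ((r : ℂ)) ^ 2 = ∑ k, (ξ k : ℂ) ^ 2 := by
      rw [show ((r : ℂ)) ^ 2 = ((r ^ 2 : ℝ) : ℂ) by push_cast; ring, hrsq]
      push_cast
      rfl
    simp only [dotProduct, hu, hv]
    rw [Finset.sum_congr rfl (fun k _ => by
      show -2 * (mu : ℂ) * (κ : ℂ) * (ξ k : ℂ) / (r : ℂ) ^ 2 * (ξ k : ℂ) =
        -2 * (mu : ℂ) * (κ : ℂ) / (r : ℂ) ^ 2 * (ξ k : ℂ) ^ 2
      ring)]
    rw [← Finset.mul_sum, ← hsC]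
    field_simp
  have hdet : (W 0).det = ((2 * (Real.pi : ℂ) / (r : ℂ)) ^ (m + 1)) * (ν : ℂ) *
      ((1 / (2 * (mu : ℂ))) ^ (m - 1)) * (1 / (2 * (mu : ℂ)) - (κ : ℂ)) := by
    rw [hW0, Matrix.det_submatrix_equiv_self, Matrix.det_fromBlocks_zero₂₁,
      hA, Matrix.det_smul]
    erw [Matrix.det_one_add_replicateCol_mul_replicateRow (ι := Fin 1) u v]
    rw [hdotv,
      Matrix.det_fin_one]
    have hDval : D 0 0 = 2 * (Real.pi : ℂ) * ((ν : ℂ) / (r : ℂ)) := rfl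
    rw [hDval, hs]
    obtain ⟨e, rfl⟩ : ∃ e, m = e + 1 := ⟨m - 1, (Nat.sub_add_cancel hm).symm⟩
    simp only [Nat.add_sub_cancel, Fintype.card_fin]
    have key : (1 : ℂ) + -2 * (mu : ℂ) * (κ : ℂ) =
        2 * (mu : ℂ) * (1 / (2 * (mu : ℂ)) - (κ : ℂ)) := by field_simp; ring
    rw [key]
    have h2 : (1 / (2 * (mu : ℂ))) * (2 * (mu : ℂ)) = 1 := by field_simp
    generalize 1 / (2 * (mu : ℂ)) = c at h2 ⊢
    linear_combination (2 * (Real.pi : ℂ) / (r : ℂ)) ^ (e + 1) * c ^ e *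
      (c - (κ : ℂ)) * (2 * (Real.pi : ℂ) * ((ν : ℂ) / (r : ℂ))) * h2
  refine ⟨hdet, ?_⟩
  rw [hdet]
  have hνC : (ν : ℂ) ≠ 0 := by exact_mod_cast hνpos.ne'
  have hν2 : 1 / (2 * (mu : ℂ)) - (κ : ℂ) ≠ 0 := by
    have : 1 / (2 * (mu : ℂ)) - (κ : ℂ) = ((1 / (2 * mu) - κ : ℝ) : ℂ) := by push_cast; ring
    rw [this, ← hν]
    exact_mod_cast hνpos.ne'
  have hπ : (2 * (Real.pi : ℂ) / (r : ℂ)) ≠ 0 := by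
    apply div_ne_zero _ hrC
    have : (Real.pi : ℂ) ≠ 0 := by exact_mod_cast Real.pi_ne_zero
    simp [this]
  have hmu2 : (1 / (2 * (mu : ℂ))) ≠ 0 := by simp [hmuC]
  exact isUnit_iff_ne_zero.2 (mul_ne_zero (mul_ne_zero
    (mul_ne_zero (pow_ne_zero _ hπ) hνC) (pow_ne_zero _ hmu2)) hν2)
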